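/- Every finitely generated subgroup of GL_n(ℂ) (n a positive natural number) is residually finite. -/

import Mathlib

def ResiduallyFinite (G : Type*) [Group G] : Prop :=
  ∀ g : G, g ≠ 1 → ∃ (F : Type) (_ : Group F) (_ : Finite F) (φ : G →* F), φ g ≠ 1



instance isJacobsonRing_int : IsJacobsonRing ℤ := by
  rw [isJacobsonRing_iff_prime_eq]
  intro P hP
  by_cases h : P = ⊥
  · subst h
    refine le_antisymm ?_ Ideal.le_jacobson
    intro x hx
    rw [Ideal.jacobson, Ideal.mem_sInf] at hx
    rw [Ideal.mem_bot]
    by_contra hx0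
    obtain ⟨p, hple, hp⟩ := Nat.exists_infinite_primes (x.natAbs + 1)
    have hpz : Prime (p : ℤ) := Nat.prime_iff_prime_int.mp hp
    have hm : (Ideal.span {(p : ℤ)}).IsMaximal :=
      PrincipalIdealRing.isMaximal_of_irreducible hpz.irreducible
    have hxp : x ∈ Ideal.span {(p : ℤ)} := hx ⟨bot_le, hm⟩
    rw [Ideal.mem_span_singleton] at hxp
    have : p ≤ x.natAbs := Nat.le_of_dvd (Int.natAbs_pos.mpr hx0)
      (Int.natAbs_dvd_natAbs.mpr hxp)
    omega
  · haveI := IsPrime.to_maximal_ideal (hpi := hP) h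
    exact Ideal.jacobson_eq_self_of_isMaximal

lemma finite_quot_of_fg (R : Type) [CommRing R] [Algebra.FiniteType ℤ R]
    (m : Ideal R) [m.IsMaximal] : Finite (R ⧸ m) := by
  letI : Field (R ⧸ m) := Ideal.Quotient.field m
  haveI : IsJacobsonRing R := isJacobsonRing_of_finiteType (A := ℤ)
  haveI : Algebra.FiniteType ℤ (R ⧸ m) :=
    Algebra.FiniteType.of_surjective (Ideal.Quotient.mkₐ ℤ m)
      (Ideal.Quotient.mkₐ_surjective ℤ m)
  haveI : Module.Finite ℤ (R ⧸ m) := finite_of_finite_type_of_isJacobsonRing ℤ _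
  haveI : Algebra.IsIntegral ℤ (R ⧸ m) := Algebra.IsIntegral.of_finite ℤ _
  set p := ringChar (R ⧸ m) with hp
  haveI : CharP (R ⧸ m) p := ringChar.charP _
  have hp0 : p ≠ 0 := by
    intro h
    haveI : CharP (R ⧸ m) 0 := h ▸ ringChar.charP _
    haveI : CharZero (R ⧸ m) := CharP.charP_to_charZero _
    have hinj : Function.Injective (algebraMap ℤ (R ⧸ m)) := by
      exact (algebraMap ℤ (R ⧸ m)).injective_int
    exact Int.not_isField
      ((Algebra.IsIntegral.isField_iff_isField hinj).mpr (Field.toIsField _))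
  have hpp : p.Prime := CharP.char_prime_of_ne_zero (R ⧸ m) hp0
  haveI : Fact p.Prime := ⟨hpp⟩
  letI : Algebra (ZMod p) (R ⧸ m) := ZMod.algebra _ p
  haveI : Module.Finite (ZMod p) (R ⧸ m) :=
    Module.Finite.of_restrictScalars_finite ℤ (ZMod p) (R ⧸ m)
  exact Module.finite_of_finite (ZMod p)

section Main

open Matrix

variable {n : ℕ}

abbrev GLC (n : ℕ) := Matrix.GeneralLinearGroup (Fin n) ℂ


-- subgroup of elements with entries (and inverse entries) in a subalgebra
def entriesIn (R : Subalgebra ℤ ℂ) (n : ℕ) : Subgroup (GLC n) where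
  carrier := {u | (∀ i j, (u.val : Matrix (Fin n) (Fin n) ℂ) i j ∈ R) ∧
    (∀ i j, ((u⁻¹ : GLC n).val) i j ∈ R)}
  one_mem' := by
    constructor <;> intro i j <;>
      · show (1 : Matrix (Fin n) (Fin n) ℂ) i j ∈ R
        rw [Matrix.one_apply]
        split_ifs <;> [exact one_mem R; exact zero_mem R]
  mul_mem' := by
    rintro u v ⟨hu1, hu2⟩ ⟨hv1, hv2⟩
    constructor
    · intro i j
      show ((u.val * v.val) : Matrix (Fin n) (Fin n) ℂ) i j ∈ R
      rw [Matrix.mul_apply]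
      exact Subalgebra.sum_mem R fun k _ => mul_mem (hu1 i k) (hv1 k j)
    · intro i j
      show (((u * v)⁻¹ : GLC n).val) i j ∈ R
      rw [_root_.mul_inv_rev]
      show ((v⁻¹.val * u⁻¹.val) : Matrix (Fin n) (Fin n) ℂ) i j ∈ R
      rw [Matrix.mul_apply]
      exact Subalgebra.sum_mem R fun k _ => mul_mem (hv2 i k) (hu2 k j)
  inv_mem' := by
    rintro u ⟨h1, h2⟩
    exact ⟨h2, by simpa using h1⟩

end Main


set_option maxHeartbeats 1000000 in
set_option synthInstance.maxHeartbeats 400000 in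
/-- Malcev: every finitely generated subgroup of GLₙ(ℂ) is residually finite. -/
theorem fg_subgroup_GL_residuallyFinite (n : ℕ) (hn : 0 < n)
    (H : Subgroup (Matrix.GeneralLinearGroup (Fin n) ℂ)) (hH : Group.FG H) :
    ResiduallyFinite H := by
  intro g hg
  have main : ∃ R : Subalgebra ℤ ℂ, Algebra.FiniteType ℤ ↥R ∧
      ∀ h : H, (h : GLC n) ∈ entriesIn R n := by
    obtain ⟨S, hS⟩ := hH.out
    set T : Set ℂ := ⋃ h ∈ (S : Set H), (Set.range fun p : Fin n × Fin n =>
        ((h : GLC n).val) p.1 p.2) ∪ (Set.range fun p : Fin n × Fin n =>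
        (((h : GLC n)⁻¹).val) p.1 p.2) with hT
    have hTfin : T.Finite :=
      Set.Finite.biUnion S.finite_toSet fun _ _ => (Set.finite_range _).union (Set.finite_range _)
    refine ⟨Algebra.adjoin ℤ T,
      (Subalgebra.fg_iff_finiteType _).mp (Subalgebra.fg_def.mpr ⟨T, hTfin, rfl⟩), ?_⟩
    have hle : Subgroup.closure (S : Set H) ≤ (entriesIn (Algebra.adjoin ℤ T) n).comap H.subtype := by
      rw [Subgroup.closure_le]
      intro s hs
      constructor
      · intro i j
        exact Algebra.subset_adjoin
          (Set.mem_biUnion hs (Set.mem_union_left _ ⟨(i, j), rfl⟩))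
      · intro i j
        exact Algebra.subset_adjoin
          (Set.mem_biUnion hs (Set.mem_union_right _ ⟨(i, j), rfl⟩))
    intro h
    exact hle (hS ▸ Subgroup.mem_top h)
  obtain ⟨R, hft, key⟩ := main
  -- matrices over R
  let A : H → Matrix (Fin n) (Fin n) ↥R := fun h i j => ⟨(h : GLC n).val i j, (key h).1 i j⟩
  let B : H → Matrix (Fin n) (Fin n) ↥R := fun h i j =>
    ⟨((h : GLC n)⁻¹).val i j, (key h).2 i j⟩
  let ι : Matrix (Fin n) (Fin n) ↥R →+* Matrix (Fin n) (Fin n) ℂ :=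
    (algebraMap ↥R ℂ).mapMatrix
  have hιinj : Function.Injective ι := fun M N h => by
    ext i j
    exact congrFun (congrFun h i) j
  have hιA : ∀ h : H, ι (A h) = (h : GLC n).val := fun h => by ext i j; rfl
  have hιB : ∀ h : H, ι (B h) = ((h : GLC n)⁻¹).val := fun h => by ext i j; rfl
  have hAB : ∀ h : H, A h * B h = 1 := fun h => by
    apply hιinj
    rw [map_mul, map_one, hιA, hιB, ← Units.val_mul, mul_inv_cancel, Units.val_one]
  have hBA : ∀ h : H, B h * A h = 1 := fun h => by
    apply hιinj
    rw [map_mul, map_one, hιA, hιB, ← Units.val_mul, inv_mul_cancel, Units.val_one]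
  have hAmul : ∀ h₁ h₂ : H, A (h₁ * h₂) = A h₁ * A h₂ := fun h₁ h₂ => by
    apply hιinj
    rw [map_mul, hιA, hιA, hιA, ← Units.val_mul]
    rfl
  have hA1 : A 1 = 1 := by
    apply hιinj
    rw [map_one, hιA]
    rfl
  -- a nonzero element of R detecting g ≠ 1
  have hgv : (g : GLC n).val ≠ 1 := fun h => hg (Subtype.ext (Units.ext h))
  have hex : ∃ i j, (g : GLC n).val i j ≠ (1 : Matrix (Fin n) (Fin n) ℂ) i j := by
    by_contra hc
    push_neg at hc
    exact hgv (by ext i j; exact hc i j)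
  obtain ⟨i0, j0, hij⟩ := hex
  set a : ↥R := A g i0 j0 - (1 : Matrix (Fin n) (Fin n) ↥R) i0 j0 with ha
  have hone : ((1 : Matrix (Fin n) (Fin n) ↥R) i0 j0 : ℂ) = (1 : Matrix (Fin n) (Fin n) ℂ) i0 j0 := by
    rw [Matrix.one_apply, Matrix.one_apply]
    split_ifs <;> simp
  have ha0 : a ≠ 0 := by
    intro h
    apply hij
    have h2 : A g i0 j0 = (1 : Matrix (Fin n) (Fin n) ↥R) i0 j0 := by
      rwa [ha, sub_eq_zero] at h
    have h3 := congrArg Subtype.val h2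
    rw [hone] at h3
    exact h3
  -- find a maximal ideal avoiding a
  haveI : IsJacobsonRing ↥R := isJacobsonRing_of_finiteType (A := ℤ)
  have hbot : (⊥ : Ideal ↥R).jacobson = ⊥ :=
    IsJacobsonRing.out' _ (by
      rw [← Ideal.radical_bot_of_noZeroDivisors]
      exact Ideal.radical_isRadical _)
  have hmax : ∃ m : Ideal ↥R, m.IsMaximal ∧ a ∉ m := by
    by_contra hc
    push_neg at hc
    have : a ∈ (⊥ : Ideal ↥R).jacobson :=
      Ideal.mem_sInf.mpr fun {I} hI => hc I hI.2
    rw [hbot, Ideal.mem_bot] at this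
    exact ha0 this
  obtain ⟨m, hm, ham⟩ := hmax
  haveI := hm
  have hk : ∃ (k : Type) (_ : CommRing k) (_ : Finite k) (ψ : ↥R →+* k), ψ a ≠ 0 :=
    ⟨↥R ⧸ m, inferInstance, finite_quot_of_fg ↥R m, Ideal.Quotient.mk m, by
      rw [Ne, Ideal.Quotient.eq_zero_iff_mem]; exact ham⟩
  obtain ⟨k, _, _, ψ, hψa⟩ := hk
  let ψm : Matrix (Fin n) (Fin n) ↥R →+* Matrix (Fin n) (Fin n) k := ψ.mapMatrix
  let φ : H →* (Matrix (Fin n) (Fin n) k)ˣ :=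
    { toFun := fun h => ⟨ψm (A h), ψm (B h),
        by rw [← map_mul, hAB, map_one], by rw [← map_mul, hBA, map_one]⟩
      map_one' := Units.ext (show ψm (A 1) = 1 by rw [hA1, map_one])
      map_mul' := fun h₁ h₂ => Units.ext
        (show ψm (A (h₁ * h₂)) = ψm (A h₁) * ψm (A h₂) by rw [hAmul, map_mul]) }
  refine ⟨(Matrix (Fin n) (Fin n) k)ˣ, inferInstance, inferInstance, φ, ?_⟩
  intro hcon
  have h1 : ψm (A g) = 1 := congrArg Units.val hcon
  have h2 : ψ (A g i0 j0) = ψ ((1 : Matrix (Fin n) (Fin n) ↥R) i0 j0) := by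
    have h4 := congrFun (congrFun h1 i0) j0
    have h3 := congrFun (congrFun (map_one ψm : ψm 1 = 1) i0) j0
    show ψm (A g) i0 j0 = ψm 1 i0 j0
    rw [h4, h3]
  apply hψa
  rw [ha, map_sub, h2, sub_self]
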